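/- The full binary tree over {a,b} whose label at position w ∈ {0,1}* is a iff w is a palindrome is antiregular. -/

import Mathlib

def subtreeAt (t : List Bool → Bool) (w : List Bool) : List Bool → Bool :=
  fun u => t (w ++ u)

def Antiregular (t : List Bool → Bool) : Prop :=
  ∀ w w' : List Bool, subtreeAt t w = subtreeAt t w' → w = w'

lemma pal_mid (w s : List Bool) :
    (w ++ (s ++ w.reverse)).reverse = w ++ (s ++ w.reverse) ↔ s.reverse = s := by
  constructor
  · intro h
    have h' : w ++ (s.reverse ++ w.reverse) = w ++ (s ++ w.reverse) := by
      simpa [List.reverse_append, List.append_assoc] using h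
    exact List.append_cancel_right (List.append_cancel_left h')
  · intro h
    simp [List.reverse_append, List.append_assoc, h]

lemma key_le (w w' : List Bool) (hle : w.length ≤ w'.length)
    (H : ∀ u : List Bool,
      ((w ++ u).reverse = w ++ u ↔ (w' ++ u).reverse = w' ++ u)) : w = w' := by
  have h1 : (w' ++ w.reverse).reverse = w' ++ w.reverse := (H w.reverse).mp (by simp)
  have h2 : w ++ w'.reverse = w' ++ w.reverse := by
    simpa [List.reverse_append] using h1
  have htake : w = w'.take w.length := by
    have h3 := congrArg (List.take w.length) h2
    rwa [List.take_left, List.take_append_of_le_length hle] at h3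
  set v := w'.drop w.length with hvdef
  have hv : w ++ v = w' := by
    rw [htake]; exact List.take_append_drop _ _
  have hrep : ∀ c : Bool, v = List.replicate v.length c := by
    intro c
    have hp : (w ++ (List.replicate v.length c ++ w.reverse)).reverse
        = w ++ (List.replicate v.length c ++ w.reverse) :=
      (pal_mid w _).mpr List.reverse_replicate
    have h3 := (H _).mp hp
    rw [← hv] at h3
    have h4 : (v ++ List.replicate v.length c).reverse
        = v ++ List.replicate v.length c :=
      (pal_mid w _).mp (by simpa [List.append_assoc] using h3)
    have h5 : List.replicate v.length c ++ v.reverse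
        = v ++ List.replicate v.length c := by
      simpa [List.reverse_append] using h4
    have h6 := congrArg (List.take v.length) h5
    rw [List.take_left' (by simp), List.take_left] at h6
    exact h6.symm.trans (by simp)
  have hft : List.replicate v.length false = List.replicate v.length true :=
    (hrep false).symm.trans (hrep true)
  cases hd : v.length with
  | zero =>
    have hnil : v = [] := List.length_eq_zero_iff.mp hd
    rw [← hv, hnil, List.append_nil]
  | succ n =>
    rw [hd] at hft
    simp [List.replicate_succ] at hft

/-- the full binary tree whose node `w` is labeled `a` iff `w` is a
palindrome is antiregular. -/
theorem palindrome_tree_antiregular :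
    Antiregular (fun w : List Bool => decide (w.reverse = w)) := by
  intro w w' h
  have H : ∀ u : List Bool,
      ((w ++ u).reverse = w ++ u ↔ (w' ++ u).reverse = w' ++ u) := by
    intro u
    have := congrFun h u
    simpa [subtreeAt, decide_eq_decide] using this
  rcases le_total w.length w'.length with hle | hle
  · exact key_le w w' hle H
  · exact (key_le w' w hle (fun u => (H u).symm)).symm
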